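/- Let A = {(a_1,b_1),...,(a_s,b_s)} be an antichain of [m]×[n] (a_i increasing, b_i decreasing), with a_0 = 0, a_{s+1} = m, b_0 = n, b_{s+1} = 0. The fine multidegree component of T_A = [Hom_S(J_A, S/J_A)]_{(0,0)} in degree d = e_j − e_i + f_h − f_k (i ≠ j, h ≠ k) is nonzero (and then one-dimensional) if and only if there is 1 ≤ ℓ ≤ s with (i,k) = (a_ℓ, b_ℓ), a_{ℓ−1} = a_ℓ − 1, b_{ℓ+1} = b_ℓ − 1, a_ℓ + 1 ≤ j ≤ a_{ℓ+1}, and b_ℓ + 1 ≤ h ≤ b_{ℓ−1}. -/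

import Mathlib

open MvPolynomial

/-- The monomial ideal generated by `x_a y_b` for `(a,b)` in a set `O ⊆ [m] × [n]`. -/
noncomputable def jA (k : Type*) [Field k] (m n : ℕ) (O : Set (Fin m × Fin n)) :
    Ideal (MvPolynomial (Fin m ⊕ Fin n) k) :=
  Ideal.span {p | ∃ v ∈ O, p = X (Sum.inl v.1) * X (Sum.inr v.2)}

/-- An `S`-linear map `φ : J → S/J` is fine-multigraded of multidegree `d ∈ ℤ^m ⊕ ℤ^n`
if it sends each monomial `x^u ∈ J` to a scalar multiple of `x^{u+d}` (or to `0`). -/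
def FineHomog {k : Type*} [Field k] {m n : ℕ} (O : Set (Fin m × Fin n))
    (d : (Fin m ⊕ Fin n) →₀ ℤ)
    (φ : ↥(jA k m n O) →ₗ[MvPolynomial (Fin m ⊕ Fin n) k]
      (MvPolynomial (Fin m ⊕ Fin n) k ⧸ jA k m n O)) : Prop :=
  ∀ (u : (Fin m ⊕ Fin n) →₀ ℕ) (h : monomial u (1 : k) ∈ jA k m n O),
    φ ⟨monomial u 1, h⟩ = 0 ∨
    ∃ (c : k) (v : (Fin m ⊕ Fin n) →₀ ℕ), c ≠ 0 ∧
      (∀ t, (v t : ℤ) = (u t : ℤ) + d t) ∧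
      φ ⟨monomial u 1, h⟩ = c • Ideal.Quotient.mk (jA k m n O) (monomial v 1)

namespace T11
variable {k : Type*} [Field k] {m n : ℕ} {O : Set (Fin m × Fin n)}

/-- exponent vector of the generator x_a y_b -/
noncomputable def gen {m n : ℕ} (v : Fin m × Fin n) : (Fin m ⊕ Fin n) →₀ ℕ :=
  Finsupp.single (Sum.inl v.1) 1 + Finsupp.single (Sum.inr v.2) 1

lemma gen_apply {m n : ℕ} (v : Fin m × Fin n) (t : Fin m ⊕ Fin n) :
    gen v t = (if t = Sum.inl v.1 then 1 else 0) + (if t = Sum.inr v.2 then 1 else 0) := by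
  simp [gen, Finsupp.single_apply, eq_comm]

lemma gen_le_iff {m n : ℕ} (v : Fin m × Fin n) (u : (Fin m ⊕ Fin n) →₀ ℕ) :
    gen v ≤ u ↔ 1 ≤ u (Sum.inl v.1) ∧ 1 ≤ u (Sum.inr v.2) := by
  constructor
  · intro h
    refine ⟨le_trans ?_ (h (Sum.inl v.1)), le_trans ?_ (h (Sum.inr v.2))⟩ <;>
      simp [gen_apply]
  · intro ⟨h1, h2⟩ t
    rw [gen_apply]
    rcases t with p | q
    · by_cases hp : (Sum.inl p : Fin m ⊕ Fin n) = Sum.inl v.1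
      · simp [hp] at h1 ⊢; omega
      · simp [hp]
    · by_cases hq : (Sum.inr q : Fin m ⊕ Fin n) = Sum.inr v.2
      · simp [hq] at h2 ⊢; omega
      · simp [hq]

lemma jA_eq : jA k m n O =
    Ideal.span ((fun s => monomial s (1 : k)) '' (gen '' O)) := by
  unfold jA
  congr 1
  ext p
  constructor
  · rintro ⟨v, hv, rfl⟩
    exact ⟨gen v, ⟨v, hv, rfl⟩, by simp [gen, X, monomial_mul]⟩
  · rintro ⟨-, ⟨v, hv, rfl⟩, rfl⟩
    exact ⟨v, hv, by simp [gen, X, monomial_mul]⟩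

lemma mem_jA_iff (p : MvPolynomial (Fin m ⊕ Fin n) k) :
    p ∈ jA k m n O ↔ ∀ u ∈ p.support, ∃ v ∈ O, gen v ≤ u := by
  rw [jA_eq, mem_ideal_span_monomial_image]
  constructor
  · intro h u hu; obtain ⟨si, ⟨v, hv, rfl⟩, hle⟩ := h u hu; exact ⟨v, hv, hle⟩
  · intro h u hu; obtain ⟨v, hv, hle⟩ := h u hu; exact ⟨gen v, ⟨v, hv, rfl⟩, hle⟩

lemma monomial_mem_jA_iff (u : (Fin m ⊕ Fin n) →₀ ℕ) :
    monomial u (1 : k) ∈ jA k m n O ↔ ∃ v ∈ O, gen v ≤ u := by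
  rw [mem_jA_iff]
  classical
  constructor
  · intro h; exact h u (by simp [support_monomial])
  · intro h u' hu'
    rw [support_monomial] at hu'
    simp at hu'
    subst hu'; exact h

lemma gen_mem_jA {v : Fin m × Fin n} (hv : v ∈ O) :
    monomial (gen v) (1 : k) ∈ jA k m n O :=
  (monomial_mem_jA_iff _).2 ⟨v, hv, le_refl _⟩

lemma mem_jA_iff' (p : MvPolynomial (Fin m ⊕ Fin n) k) :
    p ∈ jA k m n O ↔ ∀ u ∈ p.support, monomial u (1:k) ∈ jA k m n O := by
  rw [mem_jA_iff]
  exact ⟨fun h u hu => (monomial_mem_jA_iff u).2 (h u hu),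
    fun h u hu => (monomial_mem_jA_iff u).1 (h u hu)⟩

lemma linearMap_eq_zero {M : Type*} [AddCommMonoid M] [Module k M]
    (L : ↥(jA k m n O) →ₗ[k] M)
    (h : ∀ u (hu : monomial u (1:k) ∈ jA k m n O), L ⟨monomial u 1, hu⟩ = 0)
    (x : ↥(jA k m n O)) : L x = 0 := by
  obtain ⟨p, hp⟩ := x
  have hmem : ∀ u ∈ p.support, monomial u (1:k) ∈ jA k m n O :=
    (mem_jA_iff' p).1 hp
  have hx : (⟨p, hp⟩ : ↥(jA k m n O)) =
      ∑ u ∈ p.support.attach, coeff u.1 p •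
        (⟨monomial u.1 1, hmem u.1 u.2⟩ : ↥(jA k m n O)) := by
    apply Subtype.ext
    push_cast
    simp only [smul_monomial, smul_eq_mul, mul_one]
    rw [Finset.sum_attach p.support (fun u => monomial u (coeff u p))]
    exact as_sum p
  rw [hx, map_sum]
  simp only [map_smul]
  simp [h]

section Maps

variable (i j : Fin m) (hh kk : Fin n)

/-- the degree vector -/
noncomputable def dd : (Fin m ⊕ Fin n) →₀ ℤ :=
  Finsupp.single (Sum.inl j) 1 - Finsupp.single (Sum.inl i) 1 +
        Finsupp.single (Sum.inr hh) 1 - Finsupp.single (Sum.inr kk) 1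

lemma dd_apply (t : Fin m ⊕ Fin n) :
    dd i j hh kk t = (if t = Sum.inl j then 1 else 0) - (if t = Sum.inl i then 1 else 0)
      + (if t = Sum.inr hh then 1 else 0) - (if t = Sum.inr kk then 1 else 0) := by
  simp [dd, Finsupp.single_apply, eq_comm]

variable {i j hh kk}
variable {φ : ↥(jA k m n O) →ₗ[MvPolynomial (Fin m ⊕ Fin n) k]
      (MvPolynomial (Fin m ⊕ Fin n) k ⧸ jA k m n O)}

variable (hij : i ≠ j) (hhk : hh ≠ kk)
  (hfine : ∀ (u : (Fin m ⊕ Fin n) →₀ ℕ) (h : monomial u (1 : k) ∈ jA k m n O),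
    φ ⟨monomial u 1, h⟩ = 0 ∨
    ∃ (c : k) (v : (Fin m ⊕ Fin n) →₀ ℕ), c ≠ 0 ∧
      (∀ t, (v t : ℤ) = (u t : ℤ) + dd i j hh kk t) ∧
      φ ⟨monomial u 1, h⟩ = c • Ideal.Quotient.mk (jA k m n O) (monomial v 1))

include hij hhk hfine in
/-- R1 : vanishing on monomials not divisible by x_i y_kk -/
lemma vanish_of_not_le (u : (Fin m ⊕ Fin n) →₀ ℕ) (hu : monomial u (1:k) ∈ jA k m n O)
    (h0 : u (Sum.inl i) = 0 ∨ u (Sum.inr kk) = 0) :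
    φ ⟨monomial u 1, hu⟩ = 0 := by
  rcases hfine u hu with h | ⟨c, v, hc, hv, heq⟩
  · exact h
  · exfalso
    rcases h0 with h0 | h0
    · have := hv (Sum.inl i)
      rw [dd_apply] at this
      simp [hij.symm, h0] at this
      try omega
    · have := hv (Sum.inr kk)
      rw [dd_apply] at this
      simp [hhk.symm, h0] at this
      try omega

/-- R2' : factorization through a generator -/
lemma factor_through_gen (v : Fin m × Fin n) (hv : v ∈ O) (u : (Fin m ⊕ Fin n) →₀ ℕ)
    (hu : monomial u (1:k) ∈ jA k m n O) (hle : gen v ≤ u) :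
    φ ⟨monomial u 1, hu⟩ =
      monomial (u - gen v) (1:k) • φ ⟨monomial (gen v) 1, gen_mem_jA hv⟩ := by
  rw [← map_smul]
  congr 1
  apply Subtype.ext
  show monomial u (1:k) = monomial (u - gen v) (1:k) * monomial (gen v) 1
  rw [monomial_mul, mul_one, tsub_add_cancel_of_le hle]

include hij hhk hfine in
lemma vanish_at_gen (v : Fin m × Fin n) (hv : v ∈ O) (hne : v ≠ (i, kk)) :
    φ ⟨monomial (gen v) 1, gen_mem_jA hv⟩ = 0 := by
  apply vanish_of_not_le hij hhk hfine
  by_cases hvi : v.1 = i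
  · right
    have h2 : kk ≠ v.2 := fun h => hne (Prod.ext hvi h.symm)
    simp [gen_apply, h2]
  · left
    have h2 : i ≠ v.1 := fun h => hvi h.symm
    simp [gen_apply, h2]

include hij hhk hfine in
lemma phi_eq_zero_of_not_mem (hik : (i, kk) ∉ O) : φ = 0 := by
  ext x
  show (φ.restrictScalars k) x = 0
  apply linearMap_eq_zero
  intro u hu
  obtain ⟨v, hv, hle⟩ := (monomial_mem_jA_iff u).1 hu
  show φ ⟨monomial u 1, hu⟩ = 0
  rw [factor_through_gen v hv u hu hle,
    vanish_at_gen hij hhk hfine v hv (fun h => hik (h ▸ hv)), smul_zero]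

include hij hhk hfine in
lemma phi_eq_zero_of_gen_zero (hik : (i, kk) ∈ O)
    (h0 : φ ⟨monomial (gen (i,kk)) 1, gen_mem_jA hik⟩ = 0) : φ = 0 := by
  ext x
  show (φ.restrictScalars k) x = 0
  apply linearMap_eq_zero
  intro u hu
  show φ ⟨monomial u 1, hu⟩ = 0
  by_cases hle : gen (i,kk) ≤ u
  · rw [factor_through_gen (i,kk) hik u hu hle, h0, smul_zero]
  · apply vanish_of_not_le hij hhk hfine
    simp only [gen_le_iff, not_and_or, not_le, Nat.lt_one_iff] at hle
    exact hle

include hfine in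
omit hij hhk in
lemma phi_gen_val (hik : (i, kk) ∈ O) :
    ∃ c₁ : k, φ ⟨monomial (gen (i,kk)) 1, gen_mem_jA hik⟩ =
      c₁ • Ideal.Quotient.mk (jA k m n O) (monomial (gen (j,hh)) 1) := by
  rcases hfine (gen (i,kk)) (gen_mem_jA hik) with h | ⟨c, v, hc, hv, heq⟩
  · exact ⟨0, by simp [h]⟩
  · refine ⟨c, ?_⟩
    have hveq : v = gen (j, hh) := by
      ext t
      have e1 := hv t
      rw [dd_apply] at e1
      have e2 : gen (i,kk) t = (if t = Sum.inl i then 1 else 0) +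
          (if t = Sum.inr kk then 1 else 0) := gen_apply (i,kk) t
      have e3 : gen (j,hh) t = (if t = Sum.inl j then 1 else 0) +
          (if t = Sum.inr hh then 1 else 0) := gen_apply (j,hh) t
      rw [e2] at e1
      rw [e3]
      rcases t with p | q
      · simp only [Sum.inl.injEq, reduceCtorEq, if_false, add_zero, zero_add] at e1 ⊢
        split_ifs at e1 ⊢ <;> omega
      · simp only [Sum.inr.injEq, reduceCtorEq, if_false, add_zero, zero_add] at e1 ⊢
        split_ifs at e1 ⊢ <;> omega
    rw [heq, hveq]

include hij hhk hfine in
lemma step_ne_gen (hφ : φ ≠ 0) (hik : (i, kk) ∈ O) :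
    φ ⟨monomial (gen (i,kk)) 1, gen_mem_jA hik⟩ ≠ 0 := by
  intro h0
  exact hφ (phi_eq_zero_of_gen_zero hij hhk hfine hik h0)

include hij hhk hfine in
lemma step_hik (hφ : φ ≠ 0) : (i, kk) ∈ O := by
  by_contra h
  exact hφ (phi_eq_zero_of_not_mem hij hhk hfine h)

include hij hhk hfine in
lemma step_hjh (hφ : φ ≠ 0) (hik : (i, kk) ∈ O) : (j, hh) ∉ O := by
  intro hjh
  obtain ⟨c₁, hval⟩ := phi_gen_val hfine hik
  apply step_ne_gen hij hhk hfine hφ hik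
  rw [hval, Ideal.Quotient.eq_zero_iff_mem.2 (gen_mem_jA hjh), smul_zero]

include hij hhk hfine in
lemma smul_gen_zero_of (hik : (i, kk) ∈ O) (c₁ : k) (hc : c₁ ≠ 0)
    (hval : φ ⟨monomial (gen (i,kk)) 1, gen_mem_jA hik⟩ =
      c₁ • Ideal.Quotient.mk (jA k m n O) (monomial (gen (j,hh)) 1))
    (w : (Fin m ⊕ Fin n) →₀ ℕ) (v' : Fin m × Fin n) (hv' : v' ∈ O)
    (hne : v' ≠ (i,kk)) (hlev : gen v' ≤ gen (i,kk) + w) :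
    monomial (w + gen (j,hh)) (1:k) ∈ jA k m n O := by
  set u := gen (i,kk) + w with hudef
  have hle0 : gen (i,kk) ≤ u := le_self_add
  have hu : monomial u (1:k) ∈ jA k m n O := (monomial_mem_jA_iff u).2 ⟨(i,kk), hik, hle0⟩
  have e1 : φ ⟨monomial u 1, hu⟩ =
      monomial w (1:k) • (c₁ • Ideal.Quotient.mk (jA k m n O) (monomial (gen (j,hh)) (1:k))) := by
    rw [factor_through_gen (i,kk) hik u hu hle0, hval, hudef, add_tsub_cancel_left]
  have e2 : φ ⟨monomial u 1, hu⟩ = 0 := by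
    rw [factor_through_gen v' hv' u hu hlev,
      vanish_at_gen hij hhk hfine v' hv' hne, smul_zero]
  rw [e1, (smul_comm c₁ (monomial w (1:k)) _).symm] at e2
  have e3 : (monomial w (1:k)) • Ideal.Quotient.mk (jA k m n O) (monomial (gen (j,hh)) (1:k)) = 0 := by
    have e4 := congrArg (fun z => c₁⁻¹ • z) e2
    simp only [smul_smul, inv_mul_cancel₀ hc, one_smul, smul_zero] at e4
    exact e4
  rw [← Ideal.Quotient.eq_zero_iff_mem, ← one_mul (1:k), ← monomial_mul]
  exact e3

include hij hhk hfine in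
lemma step_h3 (hik : (i, kk) ∈ O) (c₁ : k) (hc : c₁ ≠ 0)
    (hval : φ ⟨monomial (gen (i,kk)) 1, gen_mem_jA hik⟩ =
      c₁ • Ideal.Quotient.mk (jA k m n O) (monomial (gen (j,hh)) 1))
    (hjh : (j, hh) ∉ O)
    (b : Fin n) (hib : (i, b) ∈ O) (hbk : b ≠ kk) : (j, b) ∈ O := by
  have hlev : gen (i,b) ≤ gen (i,kk) + Finsupp.single (Sum.inr b) 1 := by
    rw [gen_le_iff]
    constructor <;> simp [Finsupp.add_apply, Finsupp.single_apply, gen_apply]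
  have hmem := smul_gen_zero_of hij hhk hfine hik c₁ hc hval
    (Finsupp.single (Sum.inr b) 1) (i,b) hib
    (by simp [Prod.ext_iff, hbk]) hlev
  obtain ⟨v, hv, hle⟩ := (monomial_mem_jA_iff _).1 hmem
  rw [gen_le_iff] at hle
  obtain ⟨hl1, hl2⟩ := hle
  simp only [Finsupp.add_apply, Finsupp.single_apply, gen_apply, Sum.inl.injEq,
    Sum.inr.injEq, reduceCtorEq, if_false, add_zero, zero_add] at hl1 hl2
  have hp : v.1 = j := by
    by_contra hp
    have h1 : ¬ v.1 = j := hp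
    simp [h1] at hl1
  have hq : v.2 = b ∨ v.2 = hh := by
    by_cases h1 : v.2 = hh
    · exact Or.inr h1
    · left
      by_contra h2
      have h3 : ¬ b = v.2 := fun h => h2 h.symm
      simp [h1, h3] at hl2
  rcases hq with hq | hq
  · have : v = (j, b) := Prod.ext hp hq
    exact this ▸ hv
  · exact absurd ((Prod.ext hp hq : v = (j,hh)) ▸ hv) hjh

include hij hhk hfine in
lemma step_h4 (hik : (i, kk) ∈ O) (c₁ : k) (hc : c₁ ≠ 0)
    (hval : φ ⟨monomial (gen (i,kk)) 1, gen_mem_jA hik⟩ =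
      c₁ • Ideal.Quotient.mk (jA k m n O) (monomial (gen (j,hh)) 1))
    (hjh : (j, hh) ∉ O)
    (a : Fin m) (hak : (a, kk) ∈ O) (hai : a ≠ i) : (a, hh) ∈ O := by
  have hlev : gen (a,kk) ≤ gen (i,kk) + Finsupp.single (Sum.inl a) 1 := by
    rw [gen_le_iff]
    constructor <;> simp [Finsupp.add_apply, Finsupp.single_apply, gen_apply]
  have hmem := smul_gen_zero_of hij hhk hfine hik c₁ hc hval
    (Finsupp.single (Sum.inl a) 1) (a,kk) hak
    (by simp [Prod.ext_iff, hai]) hlev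
  obtain ⟨v, hv, hle⟩ := (monomial_mem_jA_iff _).1 hmem
  rw [gen_le_iff] at hle
  obtain ⟨hl1, hl2⟩ := hle
  simp only [Finsupp.add_apply, Finsupp.single_apply, gen_apply, Sum.inl.injEq,
    Sum.inr.injEq, reduceCtorEq, if_false, add_zero, zero_add] at hl1 hl2
  have hq : v.2 = hh := by
    by_contra hq
    simp [hq] at hl2
  have hp : v.1 = a ∨ v.1 = j := by
    by_cases h1 : v.1 = j
    · exact Or.inr h1
    · left
      by_contra h2
      have h3 : ¬ a = v.1 := fun h => h2 h.symm
      simp [h1, h3] at hl1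
  rcases hp with hp | hp
  · exact (Prod.ext hp hq : v = (a,hh)) ▸ hv
  · exact absurd ((Prod.ext hp hq : v = (j,hh)) ▸ hv) hjh

include hij hhk in
lemma uniqueness {φ₁ φ₂ : ↥(jA k m n O) →ₗ[MvPolynomial (Fin m ⊕ Fin n) k]
      (MvPolynomial (Fin m ⊕ Fin n) k ⧸ jA k m n O)}
    (hfine1 : ∀ (u : (Fin m ⊕ Fin n) →₀ ℕ) (h : monomial u (1 : k) ∈ jA k m n O),
      φ₁ ⟨monomial u 1, h⟩ = 0 ∨
      ∃ (c : k) (v : (Fin m ⊕ Fin n) →₀ ℕ), c ≠ 0 ∧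
        (∀ t, (v t : ℤ) = (u t : ℤ) + dd i j hh kk t) ∧
        φ₁ ⟨monomial u 1, h⟩ = c • Ideal.Quotient.mk (jA k m n O) (monomial v 1))
    (hfine2 : ∀ (u : (Fin m ⊕ Fin n) →₀ ℕ) (h : monomial u (1 : k) ∈ jA k m n O),
      φ₂ ⟨monomial u 1, h⟩ = 0 ∨
      ∃ (c : k) (v : (Fin m ⊕ Fin n) →₀ ℕ), c ≠ 0 ∧
        (∀ t, (v t : ℤ) = (u t : ℤ) + dd i j hh kk t) ∧
        φ₂ ⟨monomial u 1, h⟩ = c • Ideal.Quotient.mk (jA k m n O) (monomial v 1))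
    (hphi1 : φ₁ ≠ 0) :
    ∃ c : k, ∀ x, φ₂ x = c • φ₁ x := by
  have hik := step_hik hij hhk hfine1 hphi1
  obtain ⟨c₁, hval1⟩ := phi_gen_val hfine1 hik
  obtain ⟨c₂, hval2⟩ := phi_gen_val hfine2 hik
  have hgen_ne := step_ne_gen hij hhk hfine1 hphi1 hik
  have hc1 : c₁ ≠ 0 := by
    rintro rfl
    rw [hval1, zero_smul] at hgen_ne
    exact hgen_ne rfl
  refine ⟨c₂ * c₁⁻¹, fun x => ?_⟩
  have hz : ((φ₂.restrictScalars k) - (c₂ * c₁⁻¹) • (φ₁.restrictScalars k)) x = 0 := by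
    apply linearMap_eq_zero
    intro u hu
    simp only [LinearMap.sub_apply, LinearMap.smul_apply, LinearMap.restrictScalars_apply]
    by_cases hle : gen (i,kk) ≤ u
    · rw [factor_through_gen (i,kk) hik u hu hle, hval2,
        factor_through_gen (i,kk) hik u hu hle, hval1,
        smul_comm (c₂ * c₁⁻¹) (monomial (u - gen (i,kk)) (1:k)),
        smul_smul, mul_assoc, inv_mul_cancel₀ hc1, mul_one]
      exact sub_self _
    · have h0 : u (Sum.inl i) = 0 ∨ u (Sum.inr kk) = 0 := by
        simp only [gen_le_iff, not_and_or, not_le, Nat.lt_one_iff] at hle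
        exact hle
      rw [vanish_of_not_le hij hhk hfine1 u hu h0,
        vanish_of_not_le hij hhk hfine2 u hu h0, smul_zero, sub_zero]
  simp only [LinearMap.sub_apply, LinearMap.smul_apply, LinearMap.restrictScalars_apply] at hz
  exact sub_eq_zero.1 hz

end Maps

section Construction

variable (i j : Fin m) (hh kk : Fin n)

/-- exponent shift -/
noncomputable def tau (u : (Fin m ⊕ Fin n) →₀ ℕ) : (Fin m ⊕ Fin n) →₀ ℕ :=
  u + Finsupp.single (Sum.inl j) 1 + Finsupp.single (Sum.inr hh) 1
    - Finsupp.single (Sum.inl i) 1 - Finsupp.single (Sum.inr kk) 1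

variable {i j hh kk}

lemma tau_spec (hij : i ≠ j) (hhk : hh ≠ kk) {u : (Fin m ⊕ Fin n) →₀ ℕ}
    (hg : 1 ≤ u (Sum.inl i) ∧ 1 ≤ u (Sum.inr kk)) (t : Fin m ⊕ Fin n) :
    ((tau i j hh kk u) t : ℤ) = (u t : ℤ) + dd i j hh kk t := by
  obtain ⟨hg1, hg2⟩ := hg
  rw [dd_apply]
  simp only [tau, Finsupp.tsub_apply, Finsupp.add_apply, Finsupp.single_apply]
  rcases t with p | q
  · simp only [Sum.inl.injEq, Sum.inr.injEq, reduceCtorEq, if_false, add_zero, zero_add]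
    by_cases h1 : p = j <;> by_cases h2 : p = i
    · exact absurd (h2.symm.trans h1) hij
    · subst h1
      have h2' : ¬ i = p := fun h => h2 h.symm
      simp [h2, h2']
      try omega
    · subst h2
      have h1' : ¬ j = p := fun h => h1 h.symm
      simp [h1, h1']
      try omega
    · have h1' : ¬ j = p := fun h => h1 h.symm
      have h2' : ¬ i = p := fun h => h2 h.symm
      simp [h1, h2, h1', h2']
      try omega
  · simp only [Sum.inl.injEq, Sum.inr.injEq, reduceCtorEq, if_false, add_zero, zero_add]
    by_cases h1 : q = hh <;> by_cases h2 : q = kk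
    · exact absurd (h2.symm.trans h1) (Ne.symm hhk)
    · subst h1
      have h2' : ¬ kk = q := fun h => h2 h.symm
      simp [h2, h2']
      try omega
    · subst h2
      have h1' : ¬ hh = q := fun h => h1 h.symm
      simp [h1, h1']
      try omega
    · have h1' : ¬ hh = q := fun h => h1 h.symm
      have h2' : ¬ kk = q := fun h => h2 h.symm
      simp [h1, h2, h1', h2']
      try omega

/-- value of the would-be homomorphism on monomials -/
noncomputable def PsiFun (k : Type*) [Field k] {m n : ℕ} (O : Set (Fin m × Fin n))
    (i j : Fin m) (hh kk : Fin n) (u : (Fin m ⊕ Fin n) →₀ ℕ) :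
    MvPolynomial (Fin m ⊕ Fin n) k ⧸ jA k m n O :=
  if 1 ≤ u (Sum.inl i) ∧ 1 ≤ u (Sum.inr kk) then
    Ideal.Quotient.mk (jA k m n O) (monomial (tau i j hh kk u) 1) else 0

noncomputable def Psi (k : Type*) [Field k] {m n : ℕ} (O : Set (Fin m × Fin n))
    (i j : Fin m) (hh kk : Fin n) : MvPolynomial (Fin m ⊕ Fin n) k →ₗ[k]
    MvPolynomial (Fin m ⊕ Fin n) k ⧸ jA k m n O :=
  (basisMonomials (Fin m ⊕ Fin n) k).constr k (PsiFun k O i j hh kk)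

lemma Psi_monomial (u : (Fin m ⊕ Fin n) →₀ ℕ) :
    Psi k O i j hh kk (monomial u (1:k)) = PsiFun k O i j hh kk u := by
  have h1 : (monomial u (1:k)) = basisMonomials (Fin m ⊕ Fin n) k u := by
    rw [coe_basisMonomials]
  rw [h1, Psi, Module.Basis.constr_basis]

variable (hij : i ≠ j) (hhk : hh ≠ kk) (hik : (i, kk) ∈ O) (hjh : (j, hh) ∉ O)
  (H3 : ∀ b : Fin n, (i, b) ∈ O → b ≠ kk → (j, b) ∈ O)
  (H4 : ∀ a : Fin m, (a, kk) ∈ O → a ≠ i → (a, hh) ∈ O)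

include hij hhk hjh H3 H4 in
lemma Psi_mono_mul (μ ν : (Fin m ⊕ Fin n) →₀ ℕ) (hν : monomial ν (1:k) ∈ jA k m n O) :
    Psi k O i j hh kk (monomial μ 1 * monomial ν 1) =
      monomial μ (1:k) • Psi k O i j hh kk (monomial ν 1) := by
  rw [monomial_mul, mul_one, Psi_monomial, Psi_monomial]
  unfold PsiFun
  by_cases hg : 1 ≤ ν (Sum.inl i) ∧ 1 ≤ ν (Sum.inr kk)
  · have hg2 : 1 ≤ (μ + ν) (Sum.inl i) ∧ 1 ≤ (μ + ν) (Sum.inr kk) := by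
      simp only [Finsupp.add_apply]
      omega
    rw [if_pos hg2, if_pos hg]
    have hb : ∀ t, (Finsupp.single (Sum.inl i) 1) t + (Finsupp.single (Sum.inr kk) 1) t
        ≤ ν t := by
      intro t
      simp only [Finsupp.single_apply]
      rcases t with p | q
      · by_cases h1 : i = p
        · subst h1
          simpa using hg.1
        · simp [h1]
      · by_cases h1 : kk = q
        · subst h1
          simpa using hg.2
        · simp [h1]
    have hτ : tau i j hh kk (μ + ν) = μ + tau i j hh kk ν := by
      ext t
      have := hb t
      simp only [tau, Finsupp.tsub_apply, Finsupp.add_apply] at this ⊢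
      omega
    calc Ideal.Quotient.mk (jA k m n O) (monomial (tau i j hh kk (μ+ν)) 1)
        = Ideal.Quotient.mk (jA k m n O)
            (monomial μ (1:k) * monomial (tau i j hh kk ν) 1) := by
          rw [monomial_mul, mul_one, hτ]
      _ = monomial μ (1:k) • Ideal.Quotient.mk (jA k m n O)
            (monomial (tau i j hh kk ν) 1) := rfl
  · rw [if_neg hg, smul_zero]
    by_cases hg2 : 1 ≤ (μ + ν) (Sum.inl i) ∧ 1 ≤ (μ + ν) (Sum.inr kk)
    · rw [if_pos hg2]
      rw [Ideal.Quotient.eq_zero_iff_mem]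
      have wval := fun t => tau_spec (u := μ + ν) hij hhk hg2 t
      obtain ⟨v0, hv0, hle0⟩ := (monomial_mem_jA_iff ν).1 hν
      rw [gen_le_iff] at hle0
      obtain ⟨ha0, hb0⟩ := hle0
      rw [monomial_mem_jA_iff]
      by_cases hai : v0.1 = i
      · have hbk : v0.2 ≠ kk := by
          intro h
          rw [hai] at ha0
          rw [h] at hb0
          exact hg ⟨ha0, hb0⟩
        have hib : (i, v0.2) ∈ O := by
          have : v0 = (i, v0.2) := Prod.ext hai rfl
          exact this ▸ hv0
        have hgj : 1 ≤ tau i j hh kk (μ + ν) (Sum.inl j) := by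
          have := wval (Sum.inl j)
          rw [dd_apply] at this
          simp only [eq_self_iff_true, if_true, reduceCtorEq, if_false] at this
          have hji : ¬ (Sum.inl j : Fin m ⊕ Fin n) = Sum.inl i := by
            simp [Ne.symm hij]
          rw [if_neg hji] at this
          omega
        have hgb : 1 ≤ tau i j hh kk (μ + ν) (Sum.inr v0.2) := by
          have := wval (Sum.inr v0.2)
          rw [dd_apply] at this
          simp only [reduceCtorEq, if_false] at this
          have h2 : ¬ (Sum.inr v0.2 : Fin m ⊕ Fin n) = Sum.inr kk := by
            simp [hbk]
          rw [if_neg h2] at this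
          have h3 : (μ + ν) (Sum.inr v0.2) ≥ 1 := by
            simp only [Finsupp.add_apply]
            omega
          split_ifs at this <;> omega
        exact ⟨(j, v0.2), H3 v0.2 hib hbk, (gen_le_iff _ _).2 ⟨hgj, hgb⟩⟩
      · by_cases hbk : v0.2 = kk
        · have hak : (v0.1, kk) ∈ O := by
            have : v0 = (v0.1, kk) := Prod.ext rfl hbk
            exact this ▸ hv0
          have hga : 1 ≤ tau i j hh kk (μ + ν) (Sum.inl v0.1) := by
            have := wval (Sum.inl v0.1)
            rw [dd_apply] at this
            simp only [reduceCtorEq, if_false] at this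
            have h2 : ¬ (Sum.inl v0.1 : Fin m ⊕ Fin n) = Sum.inl i := by
              simp [hai]
            rw [if_neg h2] at this
            have h3 : (μ + ν) (Sum.inl v0.1) ≥ 1 := by
              simp only [Finsupp.add_apply]
              omega
            split_ifs at this <;> omega
          have hgh : 1 ≤ tau i j hh kk (μ + ν) (Sum.inr hh) := by
            have := wval (Sum.inr hh)
            rw [dd_apply] at this
            simp only [eq_self_iff_true, if_true, reduceCtorEq, if_false] at this
            have h2 : ¬ (Sum.inr hh : Fin m ⊕ Fin n) = Sum.inr kk := by
              simp [hhk]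
            rw [if_neg h2] at this
            omega
          exact ⟨(v0.1, hh), H4 v0.1 hak hai, (gen_le_iff _ _).2 ⟨hga, hgh⟩⟩
        · have hga : 1 ≤ tau i j hh kk (μ + ν) (Sum.inl v0.1) := by
            have := wval (Sum.inl v0.1)
            rw [dd_apply] at this
            simp only [reduceCtorEq, if_false] at this
            have h2 : ¬ (Sum.inl v0.1 : Fin m ⊕ Fin n) = Sum.inl i := by
              simp [hai]
            rw [if_neg h2] at this
            have h3 : (μ + ν) (Sum.inl v0.1) ≥ 1 := by
              simp only [Finsupp.add_apply]
              omega
            split_ifs at this <;> omega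
          have hgb : 1 ≤ tau i j hh kk (μ + ν) (Sum.inr v0.2) := by
            have := wval (Sum.inr v0.2)
            rw [dd_apply] at this
            simp only [reduceCtorEq, if_false] at this
            have h2 : ¬ (Sum.inr v0.2 : Fin m ⊕ Fin n) = Sum.inr kk := by
              simp [hbk]
            rw [if_neg h2] at this
            have h3 : (μ + ν) (Sum.inr v0.2) ≥ 1 := by
              simp only [Finsupp.add_apply]
              omega
            split_ifs at this <;> omega
          exact ⟨v0, hv0, (gen_le_iff _ _).2 ⟨hga, hgb⟩⟩
    · rw [if_neg hg2]

include hij hhk hjh H3 H4 in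
lemma Psi_mul (p q : MvPolynomial (Fin m ⊕ Fin n) k) (hq : q ∈ jA k m n O) :
    Psi k O i j hh kk (p * q) = p • Psi k O i j hh kk q := by
  have key : ∀ (c c' : k) (μ ν : (Fin m ⊕ Fin n) →₀ ℕ), monomial ν (1:k) ∈ jA k m n O →
      Psi k O i j hh kk (monomial μ c * monomial ν c') =
        monomial μ c • Psi k O i j hh kk (monomial ν c') := by
    intro c c' μ ν hν
    have h1 : monomial μ c = c • monomial μ (1:k) := by simp [smul_monomial]
    have h2 : monomial ν c' = c' • monomial ν (1:k) := by simp [smul_monomial]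
    rw [h1, h2, smul_mul_assoc, mul_smul_comm, map_smul, map_smul,
      Psi_mono_mul hij hhk hjh H3 H4 μ ν hν, map_smul, smul_assoc,
      smul_comm c' (monomial μ (1:k))]
  have hq' := (mem_jA_iff' q).1 hq
  conv_lhs => rw [as_sum p, as_sum q, Finset.sum_mul_sum]
  conv_rhs => rw [as_sum p, as_sum q]
  rw [map_sum, map_sum, Finset.sum_smul]
  refine Finset.sum_congr rfl fun μ hμ => ?_
  rw [map_sum, Finset.smul_sum]
  refine Finset.sum_congr rfl fun ν hν => ?_
  exact key _ _ _ _ (hq' ν hν)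

include hij hhk hik hjh H3 H4 in
lemma exists_phi : ∃ φ : ↥(jA k m n O) →ₗ[MvPolynomial (Fin m ⊕ Fin n) k]
      (MvPolynomial (Fin m ⊕ Fin n) k ⧸ jA k m n O),
    (∀ (u : (Fin m ⊕ Fin n) →₀ ℕ) (h : monomial u (1 : k) ∈ jA k m n O),
      φ ⟨monomial u 1, h⟩ = 0 ∨
      ∃ (c : k) (v : (Fin m ⊕ Fin n) →₀ ℕ), c ≠ 0 ∧
        (∀ t, (v t : ℤ) = (u t : ℤ) + dd i j hh kk t) ∧
        φ ⟨monomial u 1, h⟩ = c • Ideal.Quotient.mk (jA k m n O) (monomial v 1)) ∧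
    φ ≠ 0 := by
  refine ⟨{ toFun := fun x => Psi k O i j hh kk x.1,
            map_add' := fun x y => by simp,
            map_smul' := fun s x => by
              simpa using Psi_mul hij hhk hjh H3 H4 s x.1 x.2 }, ?_, ?_⟩
  · intro u hu
    show Psi k O i j hh kk (monomial u 1) = 0 ∨ _
    rw [Psi_monomial]
    unfold PsiFun
    by_cases hg : 1 ≤ u (Sum.inl i) ∧ 1 ≤ u (Sum.inr kk)
    · right
      refine ⟨1, tau i j hh kk u, one_ne_zero, tau_spec hij hhk hg, ?_⟩
      show Psi k O i j hh kk (monomial u 1) = _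
      rw [Psi_monomial]
      unfold PsiFun
      rw [if_pos hg, one_smul]
    · left
      rw [if_neg hg]
  · intro h0
    have hguard : 1 ≤ (gen (i,kk)) (Sum.inl i) ∧ 1 ≤ (gen (i,kk)) (Sum.inr kk) := by
      constructor <;> simp [gen_apply]
    have htau : tau i j hh kk (gen (i,kk)) = gen (j,hh) := by
      ext t
      simp only [tau, gen, Finsupp.tsub_apply, Finsupp.add_apply]
      omega
    have hval : Psi k O i j hh kk (monomial (gen (i,kk)) 1) =
        Ideal.Quotient.mk (jA k m n O) (monomial (gen (j,hh)) (1:k)) := by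
      rw [Psi_monomial]
      unfold PsiFun
      rw [if_pos hguard, htau]
    have hz : Psi k O i j hh kk (monomial (gen (i,kk)) 1) = 0 := by
      have := congrFun (congrArg DFunLike.coe h0) ⟨monomial (gen (i,kk)) 1, gen_mem_jA hik⟩
      simpa only [LinearMap.zero_apply, LinearMap.coe_mk, AddHom.coe_mk] using this
    rw [hval, Ideal.Quotient.eq_zero_iff_mem] at hz
    obtain ⟨v, hv, hle⟩ := (monomial_mem_jA_iff _).1 hz
    rw [gen_le_iff] at hle
    obtain ⟨hl1, hl2⟩ := hle
    have hp : v.1 = j := by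
      by_contra hp
      have h1 : ¬ j = v.1 := fun h => hp h.symm
      simp [gen_apply, h1, hp] at hl1
    have hq : v.2 = hh := by
      by_contra hq
      have h1 : ¬ hh = v.2 := fun h => hq h.symm
      simp [gen_apply, h1, hq] at hl2
    exact hjh ((Prod.ext hp hq : v = (j,hh)) ▸ hv)

end Construction

section Comb

variable {m n s : ℕ} {a b : ℕ → ℕ}

/-- numeric version of membership in O -/
def OP (s : ℕ) (a b : ℕ → ℕ) (p q : ℕ) : Prop :=
  ∃ ℓ, 1 ≤ ℓ ∧ ℓ ≤ s ∧ p + 1 ≤ a ℓ ∧ q + 1 ≤ b ℓ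

variable (ha0 : a 0 = 0) (haS : a (s + 1) = m) (hb0 : b 0 = n) (hbS : b (s + 1) = 0)
    (ha : ∀ i, 1 ≤ i → i ≤ s → 1 ≤ a i ∧ a i ≤ m)
    (hb : ∀ i, 1 ≤ i → i ≤ s → 1 ≤ b i ∧ b i ≤ n)
    (hamono : ∀ i j, 1 ≤ i → i < j → j ≤ s → a i < a j)
    (hbanti : ∀ i j, 1 ≤ i → i < j → j ≤ s → b j < b i)

include hamono in
lemma amono' : ∀ ℓ₁ ℓ₂, 1 ≤ ℓ₁ → ℓ₁ ≤ ℓ₂ → ℓ₂ ≤ s → a ℓ₁ ≤ a ℓ₂ := by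
  intro ℓ₁ ℓ₂ h1 h2 h3
  rcases eq_or_lt_of_le h2 with h | h
  · exact le_of_eq (congrArg a h)
  · exact le_of_lt (hamono _ _ h1 h h3)

include hbanti in
lemma banti' : ∀ ℓ₁ ℓ₂, 1 ≤ ℓ₁ → ℓ₁ ≤ ℓ₂ → ℓ₂ ≤ s → b ℓ₂ ≤ b ℓ₁ := by
  intro ℓ₁ ℓ₂ h1 h2 h3
  rcases eq_or_lt_of_le h2 with h | h
  · exact le_of_eq (congrArg b h.symm)
  · exact le_of_lt (hbanti _ _ h1 h h3)

include ha0 haS hb0 hbS ha hb hamono hbanti in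
lemma comb_iff {ii jj hhn kkn : ℕ} (him : ii < m) (hjm : jj < m) (hhnn : hhn < n)
    (hkn : kkn < n) (hij : ii ≠ jj) (hhk : hhn ≠ kkn) :
    (OP s a b ii kkn ∧ ¬ OP s a b jj hhn ∧
      (∀ q < n, OP s a b ii q → q ≠ kkn → OP s a b jj q) ∧
      (∀ p < m, OP s a b p kkn → p ≠ ii → OP s a b p hhn)) ↔
    (∃ ℓ, 1 ≤ ℓ ∧ ℓ ≤ s ∧ ii + 1 = a ℓ ∧ kkn + 1 = b ℓ ∧
      a (ℓ - 1) = a ℓ - 1 ∧ b (ℓ + 1) = b ℓ - 1 ∧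
      a ℓ + 1 ≤ jj + 1 ∧ jj + 1 ≤ a (ℓ + 1) ∧
      b ℓ + 1 ≤ hhn + 1 ∧ hhn + 1 ≤ b (ℓ - 1)) := by
  constructor
  · rintro ⟨h1, h2, h3, h4⟩
    obtain ⟨ℓ₁, hL1, hL2, hL3, hL4⟩ := id h1
    have hji : ii < jj := by
      rcases Nat.lt_or_ge jj ii with h | h
      · exfalso
        exact h2 (h4 jj hjm ⟨ℓ₁, hL1, hL2, by omega, hL4⟩ (fun hcon => hij hcon.symm))
      · omega
    have hkh : kkn < hhn := by
      rcases Nat.lt_or_ge hhn kkn with h | h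
      · exfalso
        exact h2 (h3 hhn hhnn ⟨ℓ₁, hL1, hL2, hL3, by omega⟩ hhk)
      · omega
    -- ℓ : the largest index with b ℓ ≥ kkn + 1
    obtain ⟨ℓ, hl1, hls, hlb, hgreat⟩ : ∃ ℓ, 1 ≤ ℓ ∧ ℓ ≤ s ∧ kkn + 1 ≤ b ℓ ∧
        ∀ t, ℓ < t → t ≤ s → b t ≤ kkn := by
      have hsp := Nat.findGreatest_spec (P := fun t => 1 ≤ t ∧ kkn + 1 ≤ b t)
        (m := ℓ₁) hL2 ⟨hL1, hL4⟩
      refine ⟨_, hsp.1, Nat.findGreatest_le s, hsp.2, ?_⟩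
      intro t h5 h6
      have h7 := Nat.findGreatest_is_greatest (P := fun t => 1 ≤ t ∧ kkn + 1 ≤ b t) h5 h6
      by_contra h8
      exact h7 ⟨by omega, by omega⟩
    -- characterization of OP _ kkn
    have hak : ∀ p, OP s a b p kkn ↔ p + 1 ≤ a ℓ := by
      intro p
      constructor
      · rintro ⟨ℓ₂, g1, g2, g3, g4⟩
        have h5 : ℓ₂ ≤ ℓ := by
          by_contra h5
          have := hgreat ℓ₂ (by omega) g2
          omega
        have := amono' hamono ℓ₂ ℓ g1 h5 hls
        omega
      · intro hp
        exact ⟨ℓ, hl1, hls, hp, hlb⟩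
    -- L : the smallest index with a L ≥ ii + 1
    obtain ⟨L, hM1, hMs, hMa, hMmin⟩ : ∃ L, 1 ≤ L ∧ L ≤ s ∧ ii + 1 ≤ a L ∧
        ∀ t, 1 ≤ t → t ≤ s → ii + 1 ≤ a t → L ≤ t := by
      have hQex : ∃ t, 1 ≤ t ∧ t ≤ s ∧ ii + 1 ≤ a t := ⟨ℓ₁, hL1, hL2, hL3⟩
      have hsp := Nat.find_spec hQex
      exact ⟨Nat.find hQex, hsp.1, hsp.2.1, hsp.2.2,
        fun t g1 g2 g3 => Nat.find_min' hQex ⟨g1, g2, g3⟩⟩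
    have hbk : ∀ q, OP s a b ii q ↔ q + 1 ≤ b L := by
      intro q
      constructor
      · rintro ⟨ℓ₂, g1, g2, g3, g4⟩
        have h5 : L ≤ ℓ₂ := hMmin ℓ₂ g1 g2 g3
        have := banti' hbanti L ℓ₂ hM1 h5 g2
        omega
      · intro hq
        exact ⟨L, hM1, hMs, hMa, hq⟩
    -- b L = kkn + 1
    have hbL : b L = kkn + 1 := by
      have hge : kkn + 1 ≤ b L := (hbk kkn).1 h1
      by_contra hcon
      have hgt : kkn + 1 < b L := by omega
      have hbLn : b L ≤ n := (hb L hM1 hMs).2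
      have hOP : OP s a b ii (b L - 1) := (hbk (b L - 1)).2 (by omega)
      obtain ⟨ℓ₂, g1, g2, g3, g4⟩ := h3 (b L - 1) (by omega) hOP (by omega)
      exact h2 (h4 jj hjm ⟨ℓ₂, g1, g2, g3, by omega⟩ (fun hcon2 => hij hcon2.symm))
    -- a ℓ = ii + 1
    have haℓ : a ℓ = ii + 1 := by
      have hge : ii + 1 ≤ a ℓ := (hak ii).1 h1
      by_contra hcon
      have hgt : ii + 1 < a ℓ := by omega
      have haℓm : a ℓ ≤ m := (ha ℓ hl1 hls).2
      have hOP : OP s a b (a ℓ - 1) kkn := (hak (a ℓ - 1)).2 (by omega)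
      obtain ⟨ℓ₂, g1, g2, g3, g4⟩ := h4 (a ℓ - 1) (by omega) hOP (by omega)
      exact h2 (h3 hhn hhnn ⟨ℓ₂, g1, g2, by omega, g4⟩ hhk)
    -- L = ℓ
    have hLl : L = ℓ := by
      have h5 : L ≤ ℓ := hMmin ℓ hl1 hls (by omega)
      by_contra hcon
      have h6 : L < ℓ := by omega
      have h7 := hamono L ℓ hM1 h6 hls
      omega
    have hbℓ : b ℓ = kkn + 1 := by rw [← hLl]; exact hbL
    -- the auxiliary facts about neighbours
    have hii_red : 2 ≤ ℓ → 1 ≤ ii := by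
      intro htwo
      by_contra hii
      have h5 : a (ℓ - 1) < a ℓ := hamono (ℓ - 1) ℓ (by omega) (by omega) hls
      have h6 := (ha (ℓ - 1) (by omega) (by omega)).1
      omega
    have hkk_red : ℓ < s → 1 ≤ kkn := by
      intro hlt
      by_contra hkk
      have h5 : b (ℓ + 1) < b ℓ := hbanti ℓ (ℓ + 1) hl1 (by omega) (by omega)
      have h6 := (hb (ℓ + 1) (by omega) (by omega)).1
      omega
    have side_a : 2 ≤ ℓ → a (ℓ - 1) = a ℓ - 1 ∧ hhn + 1 ≤ b (ℓ - 1) := by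
      intro htwo
      have hii1 := hii_red htwo
      have hOP : OP s a b (ii - 1) kkn := (hak (ii - 1)).2 (by omega)
      obtain ⟨ℓ₂, g1, g2, g3, g4⟩ := h4 (ii - 1) (by omega) hOP (by omega)
      have h5 : ℓ₂ < ℓ := by
        by_contra h5
        have := banti' hbanti ℓ ℓ₂ hl1 (by omega) g2
        omega
      have h6 : a ℓ₂ ≤ a (ℓ - 1) := amono' hamono ℓ₂ (ℓ - 1) g1 (by omega) (by omega)
      have h7 : a (ℓ - 1) < a ℓ := hamono (ℓ - 1) ℓ (by omega) (by omega) hls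
      have h8 : a (ℓ - 1) = a ℓ - 1 := by omega
      have h9 : ℓ₂ = ℓ - 1 := by
        by_contra h9
        have h10 : a ℓ₂ < a (ℓ - 1) := hamono ℓ₂ (ℓ - 1) g1 (by omega) (by omega)
        omega
      rw [h9] at g4
      exact ⟨h8, by omega⟩
    have side_b : ℓ < s → b (ℓ + 1) = b ℓ - 1 ∧ jj + 1 ≤ a (ℓ + 1) := by
      intro hlt
      have hkk1 := hkk_red hlt
      have hOP : OP s a b ii (kkn - 1) := (hbk (kkn - 1)).2 (by omega)
      obtain ⟨ℓ₂, g1, g2, g3, g4⟩ := h3 (kkn - 1) (by omega) hOP (by omega)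
      have hji2 : jj + 1 ≤ a ℓ₂ := g3
      have h5 : ℓ < ℓ₂ := by
        by_contra h5
        have := amono' hamono ℓ₂ ℓ g1 (by omega) hls
        omega
      have h8 : b (ℓ + 1) < b ℓ := hbanti ℓ (ℓ + 1) hl1 (by omega) (by omega)
      have h6 : ℓ₂ = ℓ + 1 := by
        by_contra h6
        have h7 : b ℓ₂ < b (ℓ + 1) := hbanti (ℓ + 1) ℓ₂ (by omega) (by omega) g2
        omega
      rw [h6] at g4 hji2
      exact ⟨by omega, by omega⟩
    refine ⟨ℓ, hl1, hls, haℓ.symm, hbℓ.symm, ?_, ?_, by omega, ?_, by omega, ?_⟩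
    · rcases Nat.eq_or_lt_of_le hl1 with hone | htwo
      · have hii0 : ii = 0 := by
          by_contra hii
          have hOP : OP s a b (ii - 1) kkn := (hak (ii - 1)).2 (by omega)
          obtain ⟨ℓ₂, g1, g2, g3, g4⟩ := h4 (ii - 1) (by omega) hOP (by omega)
          have h5 : b ℓ₂ ≤ b ℓ := banti' hbanti ℓ ℓ₂ hl1 (by omega) g2
          omega
        have e0 : a (ℓ - 1) = 0 := by
          rw [← hone]
          norm_num [ha0]
        omega
      · exact (side_a htwo).1
    · rcases Nat.eq_or_lt_of_le hls with hsl | hlt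
      · have hkk0 : kkn = 0 := by
          by_contra hkk
          have hOP : OP s a b ii (kkn - 1) := (hbk (kkn - 1)).2 (by omega)
          obtain ⟨ℓ₂, g1, g2, g3, g4⟩ := h3 (kkn - 1) (by omega) hOP (by omega)
          have h5 : a ℓ₂ ≤ a ℓ := amono' hamono ℓ₂ ℓ g1 (by omega) hls
          omega
        have e0 : b (ℓ + 1) = 0 := by
          rw [hsl, hbS]
        omega
      · exact (side_b hlt).1
    · rcases Nat.eq_or_lt_of_le hls with hsl | hlt
      · have e0 : a (ℓ + 1) = m := by rw [hsl, haS]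
        omega
      · exact (side_b hlt).2
    · rcases Nat.eq_or_lt_of_le hl1 with hone | htwo
      · have e0 : b (ℓ - 1) = n := by
          rw [← hone]
          norm_num [hb0]
        omega
      · exact (side_a htwo).2
  · rintro ⟨ℓ, hl1, hls, hia, hkb, hal1, hbl1, haj1, haj2, hbh1, hbh2⟩
    refine ⟨⟨ℓ, hl1, hls, by omega, by omega⟩, ?_, ?_, ?_⟩
    · rintro ⟨ℓ₂, g1, g2, g3, g4⟩
      have h5 : ℓ < ℓ₂ := by
        by_contra h5
        have := amono' hamono ℓ₂ ℓ g1 (by omega) hls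
        omega
      have h6 : b ℓ₂ ≤ b (ℓ + 1) := banti' hbanti (ℓ + 1) ℓ₂ (by omega) (by omega) g2
      omega
    · rintro q hqn ⟨ℓ₂, g1, g2, g3, g4⟩ hqk
      have h5 : ℓ ≤ ℓ₂ := by
        by_contra h5
        have := hamono ℓ₂ ℓ g1 (by omega) hls
        omega
      have h6 : b ℓ₂ ≤ b ℓ := banti' hbanti ℓ ℓ₂ hl1 h5 g2
      have h7 : q + 1 ≤ b (ℓ + 1) := by omega
      have h8 : ℓ + 1 ≤ s := by
        by_contra h8
        have h9 : ℓ = s := by omega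
        rw [h9, hbS] at h7
        omega
      exact ⟨ℓ + 1, by omega, h8, by omega, h7⟩
    · rintro p hpm ⟨ℓ₂, g1, g2, g3, g4⟩ hpi
      have h5 : ℓ₂ ≤ ℓ := by
        by_contra h5
        have := hbanti ℓ ℓ₂ hl1 (by omega) g2
        omega
      have h6 : a ℓ₂ ≤ a ℓ := amono' hamono ℓ₂ ℓ g1 h5 hls
      have h7 : p + 1 ≤ a (ℓ - 1) := by omega
      have h8 : 1 ≤ ℓ - 1 := by
        by_contra h8
        have h9 : ℓ = 1 := by omega
        rw [h9] at h7
        have e0 : a (1 - 1) = 0 := by norm_num [ha0]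
        omega
      exact ⟨ℓ - 1, h8, by omega, h7, by omega⟩

end Comb

end T11

set_option maxHeartbeats 1000000 in
open T11 in
/-- Description of quadratic tangents: for an antichain `A = {(a_1,b_1),…,(a_s,b_s)}` of
`[m] × [n]` (with conventions `a_0 = 0`, `a_{s+1} = m`, `b_0 = n`, `b_{s+1} = 0`), the fine
multidegree component of `T_A = [Hom_S(J_A, S/J_A)]_{(0,0)}` in degree
`d = e_j − e_i + f_h − f_k` (`i ≠ j`, `h ≠ k`) is nonzero (and then one-dimensional) if and
only if there is `1 ≤ ℓ ≤ s` with `(i,k) = (a_ℓ, b_ℓ)`, `a_{ℓ−1} = a_ℓ − 1`,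
`b_{ℓ+1} = b_ℓ − 1`, `a_ℓ + 1 ≤ j ≤ a_{ℓ+1}` and `b_ℓ + 1 ≤ h ≤ b_{ℓ−1}`.
The variable `x_i` for `i : Fin m` has 1-indexed label `(i : ℕ) + 1`. -/
theorem stmt11 {k : Type*} [Field k] (m n s : ℕ) (a b : ℕ → ℕ)
    (ha0 : a 0 = 0) (haS : a (s + 1) = m) (hb0 : b 0 = n) (hbS : b (s + 1) = 0)
    (ha : ∀ i, 1 ≤ i → i ≤ s → 1 ≤ a i ∧ a i ≤ m)
    (hb : ∀ i, 1 ≤ i → i ≤ s → 1 ≤ b i ∧ b i ≤ n)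
    (hamono : ∀ i j, 1 ≤ i → i < j → j ≤ s → a i < a j)
    (hbanti : ∀ i j, 1 ≤ i → i < j → j ≤ s → b j < b i)
    (i j : Fin m) (hh kk : Fin n) (hij : i ≠ j) (hhk : hh ≠ kk) :
    let O : Set (Fin m × Fin n) :=
      {v | ∃ ℓ, 1 ≤ ℓ ∧ ℓ ≤ s ∧ (v.1 : ℕ) + 1 ≤ a ℓ ∧ (v.2 : ℕ) + 1 ≤ b ℓ}
    let d : (Fin m ⊕ Fin n) →₀ ℤ :=
      Finsupp.single (Sum.inl j) 1 - Finsupp.single (Sum.inl i) 1 +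
        Finsupp.single (Sum.inr hh) 1 - Finsupp.single (Sum.inr kk) 1
    ((∃ φ : ↥(jA k m n O) →ₗ[MvPolynomial (Fin m ⊕ Fin n) k]
        (MvPolynomial (Fin m ⊕ Fin n) k ⧸ jA k m n O),
        FineHomog O d φ ∧ φ ≠ 0) ↔
      (∃ ℓ, 1 ≤ ℓ ∧ ℓ ≤ s ∧
        (i : ℕ) + 1 = a ℓ ∧ (kk : ℕ) + 1 = b ℓ ∧
        a (ℓ - 1) = a ℓ - 1 ∧ b (ℓ + 1) = b ℓ - 1 ∧
        a ℓ + 1 ≤ (j : ℕ) + 1 ∧ (j : ℕ) + 1 ≤ a (ℓ + 1) ∧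
        b ℓ + 1 ≤ (hh : ℕ) + 1 ∧ (hh : ℕ) + 1 ≤ b (ℓ - 1))) ∧
    (∀ φ₁ φ₂ : ↥(jA k m n O) →ₗ[MvPolynomial (Fin m ⊕ Fin n) k]
        (MvPolynomial (Fin m ⊕ Fin n) k ⧸ jA k m n O),
      FineHomog O d φ₁ → FineHomog O d φ₂ → φ₁ ≠ 0 →
      ∃ c : k, ∀ x, φ₂ x = c • φ₁ x) := by
  intro O d
  have hijn : (i : ℕ) ≠ (j : ℕ) := fun h => hij (Fin.ext h)
  have hhkn : (hh : ℕ) ≠ (kk : ℕ) := fun h => hhk (Fin.ext h)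
  constructor
  · constructor
    · rintro ⟨φ, hfine, hφ⟩
      have hfine' : ∀ (u : (Fin m ⊕ Fin n) →₀ ℕ) (h : monomial u (1 : k) ∈ jA k m n O),
          φ ⟨monomial u 1, h⟩ = 0 ∨
          ∃ (c : k) (v : (Fin m ⊕ Fin n) →₀ ℕ), c ≠ 0 ∧
            (∀ t, (v t : ℤ) = (u t : ℤ) + dd i j hh kk t) ∧
            φ ⟨monomial u 1, h⟩ = c • Ideal.Quotient.mk (jA k m n O) (monomial v 1) :=
        hfine
      have hik := step_hik hij hhk hfine' hφ
      obtain ⟨c₁, hval⟩ := phi_gen_val hfine' hik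
      have hne := step_ne_gen hij hhk hfine' hφ hik
      have hc1 : c₁ ≠ 0 := by
        rintro rfl
        rw [hval, zero_smul] at hne
        exact hne rfl
      have hjh := step_hjh hij hhk hfine' hφ hik
      have H3 := step_h3 hij hhk hfine' hik c₁ hc1 hval hjh
      have H4 := step_h4 hij hhk hfine' hik c₁ hc1 hval hjh
      refine (comb_iff ha0 haS hb0 hbS ha hb hamono hbanti
        i.isLt j.isLt hh.isLt kk.isLt hijn hhkn).1 ⟨hik, hjh, ?_, ?_⟩
      · intro q hq hOP hqk
        exact H3 ⟨q, hq⟩ hOP (fun e => hqk (congrArg Fin.val e))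
      · intro p hp hOP hpi
        exact H4 ⟨p, hp⟩ hOP (fun e => hpi (congrArg Fin.val e))
    · intro hcomb
      obtain ⟨hik, hjh, h3', h4'⟩ := (comb_iff ha0 haS hb0 hbS ha hb hamono hbanti
        i.isLt j.isLt hh.isLt kk.isLt hijn hhkn).2 hcomb
      have H3 : ∀ b' : Fin n, (i, b') ∈ O → b' ≠ kk → (j, b') ∈ O :=
        fun b' hb' hbk => h3' b' b'.isLt hb' (fun e => hbk (Fin.ext e))
      have H4 : ∀ a' : Fin m, (a', kk) ∈ O → a' ≠ i → (a', hh) ∈ O :=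
        fun a' ha' hai => h4' a' a'.isLt ha' (fun e => hai (Fin.ext e))
      have hikO : (i, kk) ∈ O := hik
      have hjhO : (j, hh) ∉ O := hjh
      obtain ⟨φ, hf, hφ⟩ := exists_phi (k := k) (O := O) hij hhk hikO hjhO H3 H4
      exact ⟨φ, hf, hφ⟩
  · intro φ₁ φ₂ hf1 hf2 h1
    exact uniqueness hij hhk hf1 hf2 h1
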